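/- (Uhlmann's theorem) Let ρ^A and σ^A be density operators on A, and let |ψ⟩ ∈ A ⊗ B and |φ⟩ ∈ A ⊗ C be purifications of ρ^A and σ^A respectively. Then the fidelity F(ρ, σ) = ‖√ρ √σ‖₁ equals the maximum over partial isometries V: B → C of |⟨ψ|(I_A ⊗ V†)|φ⟩|. -/

import Mathlib

open Matrix Kronecker
open scoped ComplexOrder

/-- The square root of a positive semidefinite matrix, as defined in Mathlib (Dec 2024). -/
noncomputable def Matrix.PosSemidef.sqrt {n 𝕜 : Type*} [Fintype n] [RCLike 𝕜] [DecidableEq n]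
    {A : Matrix n n 𝕜} (hA : A.PosSemidef) : Matrix n n 𝕜 :=
  hA.1.eigenvectorUnitary.1 * diagonal ((↑) ∘ (√·) ∘ hA.1.eigenvalues) *
  (star hA.1.eigenvectorUnitary : Matrix n n 𝕜)

noncomputable def traceNorm {n m : Type*} [Fintype n] [Fintype m] [DecidableEq m]
    (M : Matrix n m ℂ) : ℝ :=
  ((Matrix.posSemidef_conjTranspose_mul_self M).sqrt.trace).re

noncomputable def ptraceFst {a b : Type*} [Fintype a]
    (M : Matrix (a × b) (a × b) ℂ) : Matrix b b ℂ :=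
  Matrix.of fun i j => ∑ k, M (k, i) (k, j)

noncomputable def ptraceSnd {a b : Type*} [Fintype b]
    (M : Matrix (a × b) (a × b) ℂ) : Matrix a a ℂ :=
  Matrix.of fun i j => ∑ k, M (i, k) (j, k)


open scoped InnerProductSpace

open scoped MatrixOrder in
private lemma Matrix.PosSemidef.sqrt_eq_cfc' {n : Type*} [Fintype n] [DecidableEq n]
    {A : Matrix n n ℂ} (hA : A.PosSemidef) : hA.sqrt = CFC.sqrt A := by
  rw [CFC.sqrt_eq_cfc, cfc_nnreal_eq_real _ A hA.nonneg, hA.1.cfc_eq]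
  simp only [IsHermitian.cfc, Unitary.conjStarAlgAut_apply, Matrix.PosSemidef.sqrt]
  congr 2
  ext i j
  simp [diagonal_apply, max_eq_left (hA.eigenvalues_nonneg i)]

open scoped MatrixOrder in
lemma Matrix.PosSemidef.posSemidef_sqrt {n : Type*} [Fintype n] [DecidableEq n]
    {A : Matrix n n ℂ} (hA : A.PosSemidef) : hA.sqrt.PosSemidef := by
  rw [hA.sqrt_eq_cfc']; exact (CFC.sqrt_nonneg A).posSemidef

open scoped MatrixOrder in
lemma Matrix.PosSemidef.sq_sqrt {n : Type*} [Fintype n] [DecidableEq n]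
    {A : Matrix n n ℂ} (hA : A.PosSemidef) : hA.sqrt ^ 2 = A := by
  rw [hA.sqrt_eq_cfc']; exact CFC.sq_sqrt A hA.nonneg

open scoped MatrixOrder in
lemma Matrix.PosSemidef.sqrt_mul_self {n : Type*} [Fintype n] [DecidableEq n]
    {A : Matrix n n ℂ} (hA : A.PosSemidef) : hA.sqrt * hA.sqrt = A := by
  rw [hA.sqrt_eq_cfc']; exact CFC.sqrt_mul_sqrt_self A hA.nonneg

open scoped MatrixOrder in
lemma Matrix.PosSemidef.eq_sqrt_of_sq_eq {n : Type*} [Fintype n] [DecidableEq n]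
    {A : Matrix n n ℂ} (hA : A.PosSemidef) {B : Matrix n n ℂ} (hB : B.PosSemidef)
    (hAB : A ^ 2 = B) : A = hB.sqrt := by
  rw [hB.sqrt_eq_cfc', eq_comm, CFC.sqrt_eq_iff B A hB.nonneg hA.nonneg, ← hAB, sq]

section UhlmannAux

variable {m n p : Type*} [Fintype m] [Fintype n] [Fintype p]
  [DecidableEq m] [DecidableEq n] [DecidableEq p]

private lemma psd_trace_nonneg' {M : Matrix n n ℂ} (hM : M.PosSemidef) : 0 ≤ M.trace := by
  exact hM.trace_nonneg

private lemma psd_abs_trace' {M : Matrix n n ℂ} (hM : M.PosSemidef) :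
    ‖M.trace‖ = M.trace.re := by
  have h := psd_trace_nonneg' hM
  rw [Complex.nonneg_iff] at h
  have h2 : M.trace = (M.trace.re : ℂ) := Complex.ext rfl (by simpa using h.2.symm)
  calc ‖M.trace‖ = ‖(M.trace.re : ℂ)‖ := by rw [← h2]
  _ = |M.trace.re| := by simp
  _ = M.trace.re := abs_of_nonneg h.1

private lemma trace_re_mono' {X Y : Matrix n n ℂ} (h : (Y - X).PosSemidef) :
    X.trace.re ≤ Y.trace.re := by
  have h2 := psd_trace_nonneg' h
  rw [trace_sub, Complex.nonneg_iff] at h2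
  simp only [Complex.sub_re] at h2
  linarith [h2.1]

private lemma idem_flip' {U : Matrix m n ℂ} (h : (Uᴴ*U)*(Uᴴ*U) = Uᴴ*U) :
    (U*Uᴴ)*(U*Uᴴ) = U*Uᴴ := by
  have h' : Uᴴ*U*Uᴴ*U = Uᴴ*U := by rw [Matrix.mul_assoc, h]
  have key : U * (Uᴴ * U) = U := by
    rw [← sub_eq_zero, ← conjTranspose_mul_self_eq_zero]
    have e1 : (U * (Uᴴ * U) - U)ᴴ = (Uᴴ*U) * Uᴴ - Uᴴ := by
      simp [conjTranspose_mul, Matrix.mul_assoc]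
    rw [e1]
    simp only [Matrix.sub_mul, Matrix.mul_sub, ← Matrix.mul_assoc, h']
    abel
  calc (U*Uᴴ)*(U*Uᴴ) = (U * (Uᴴ*U)) * Uᴴ := by simp only [Matrix.mul_assoc]
  _ = U*Uᴴ := by rw [key]

private lemma trace_conj_mul_eq_sum' (A B : Matrix m n ℂ) :
    (Aᴴ*B).trace = ∑ q : m × n, (starRingEnd ℂ) (A q.1 q.2) * B q.1 q.2 := by
  simp only [Matrix.trace, Matrix.diag_apply, Matrix.mul_apply, conjTranspose_apply,
    Fintype.sum_prod_type]
  rw [Finset.sum_comm]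
  rfl

private lemma cs_trace' (A B : Matrix m n ℂ) :
    ‖(Aᴴ*B).trace‖ ≤
      Real.sqrt ((Aᴴ*A).trace.re) * Real.sqrt ((Bᴴ*B).trace.re) := by
  set x : EuclideanSpace ℂ (m × n) := (EuclideanSpace.equiv (m × n) ℂ).symm (fun q => A q.1 q.2)
  set y : EuclideanSpace ℂ (m × n) := (EuclideanSpace.equiv (m × n) ℂ).symm (fun q => B q.1 q.2)
  have key : ∀ C D : Matrix m n ℂ, (Cᴴ*D).trace =
      ⟪(EuclideanSpace.equiv (m × n) ℂ).symm (fun q => C q.1 q.2),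
       (EuclideanSpace.equiv (m × n) ℂ).symm (fun q => D q.1 q.2)⟫_ℂ := by
    intro C D
    rw [trace_conj_mul_eq_sum']
    simp [PiLp.inner_apply, RCLike.inner_apply]
    exact Finset.sum_congr rfl fun _ _ => mul_comm _ _
  have hx : (Aᴴ*A).trace.re = ‖x‖^2 := by
    rw [key A A, ← inner_self_eq_norm_sq (𝕜 := ℂ) (x := x)]
    rfl
  have hy : (Bᴴ*B).trace.re = ‖y‖^2 := by
    rw [key B B, ← inner_self_eq_norm_sq (𝕜 := ℂ) (x := y)]
    rfl
  have h := norm_inner_le_norm (𝕜 := ℂ) x y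
  rw [key A B]
  calc ‖⟪x, y⟫_ℂ‖ = ‖⟪x, y⟫_ℂ‖ := rfl
  _ ≤ ‖x‖ * ‖y‖ := h
  _ = Real.sqrt ((Aᴴ*A).trace.re) * Real.sqrt ((Bᴴ*B).trace.re) := by
      rw [hx, hy, Real.sqrt_sq (norm_nonneg _), Real.sqrt_sq (norm_nonneg _)]

private lemma polar' (M : Matrix m n ℂ) : ∃ U : Matrix m n ℂ,
    M = U * (posSemidef_conjTranspose_mul_self M).sqrt ∧
    (Uᴴ*U) * (posSemidef_conjTranspose_mul_self M).sqrt
      = (posSemidef_conjTranspose_mul_self M).sqrt ∧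
    (Uᴴ*U)*(Uᴴ*U) = Uᴴ*U := by
  set hH := posSemidef_conjTranspose_mul_self M with hHdef
  set u : Matrix n n ℂ := hH.1.eigenvectorUnitary.1 with hu
  set d : n → ℝ := hH.1.eigenvalues with hd
  have hdnn : ∀ i, 0 ≤ d i := fun i => hH.eigenvalues_nonneg i
  have hsu : star u * u = 1 := mem_unitaryGroup_iff'.mp hH.1.eigenvectorUnitary.2
  have hus : u * star u = 1 := mem_unitaryGroup_iff.mp hH.1.eigenvectorUnitary.2
  have hspec : Mᴴ * M = u * diagonal (fun i => (d i : ℂ)) * star u := by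
    have := hH.1.spectral_theorem
    rw [Unitary.conjStarAlgAut_apply] at this
    exact this
  have hsqrt : hH.sqrt = u * diagonal (fun i => (Real.sqrt (d i) : ℂ)) * star u := by
    rfl
  have mulsand : ∀ f h : n → ℂ, (u * diagonal f * star u) * (u * diagonal h * star u)
      = u * diagonal (fun i => f i * h i) * star u := by
    intro f h
    have e1 : diagonal f * ((star u * u) * (diagonal h * star u))
        = diagonal (fun i => f i * h i) * star u := by
      rw [hsu, one_mul, ← mul_assoc, diagonal_mul_diagonal]
    calc (u * diagonal f * star u) * (u * diagonal h * star u)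
        = u * (diagonal f * ((star u * u) * (diagonal h * star u))) := by
          simp only [Matrix.mul_assoc]
      _ = u * (diagonal (fun i => f i * h i) * star u) := by rw [e1]
      _ = u * diagonal (fun i => f i * h i) * star u := by rw [← Matrix.mul_assoc]
  have sandherm : ∀ f : n → ℂ, (∀ i, star (f i) = f i) →
      (u * diagonal f * star u)ᴴ = u * diagonal f * star u := by
    intro f hf
    have hsf : star f = f := by funext i; exact hf i
    have : (diagonal f)ᴴ = diagonal f := by rw [diagonal_conjTranspose, hsf]
    simp only [conjTranspose_mul, star_eq_conjTranspose, conjTranspose_conjTranspose, this,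
      Matrix.mul_assoc]
  have hannih : ∀ f : n → ℂ, (∀ i, star (f i) = f i) → (∀ i, f i * (d i) * f i = 0) →
      M * (u * diagonal f * star u) = 0 := by
    intro f hf hfd
    have hSh := sandherm f hf
    rw [← conjTranspose_mul_self_eq_zero]
    have e2 : (M * (u * diagonal f * star u))ᴴ * (M * (u * diagonal f * star u))
        = (u * diagonal f * star u) * (Mᴴ * M) * (u * diagonal f * star u) := by
      rw [conjTranspose_mul, hSh]
      simp only [Matrix.mul_assoc]
    rw [e2, hspec, mulsand, mulsand]
    have h0 : (fun i => f i * (d i : ℂ) * f i) = (fun _ => (0:ℂ)) := funext fun i => hfd i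
    calc u * diagonal (fun i => f i * (d i : ℂ) * f i) * star u
        = u * diagonal (fun _ => (0:ℂ)) * star u :=
          congrArg (fun f => u * diagonal f * star u) h0
      _ = 0 := by simp [diagonal_zero]
  set g : n → ℂ := fun i => if d i = 0 then 0 else ((Real.sqrt (d i) : ℂ))⁻¹ with hg
  set e : n → ℂ := fun i => if d i = 0 then 0 else 1 with he
  set U := M * (u * diagonal g * star u) with hU
  have hge : ∀ i, star (g i) = g i := by
    intro i
    by_cases h : d i = 0 <;> simp [hg, h]
  have hTh := sandherm g hge
  have hUU : Uᴴ * U = u * diagonal e * star u := by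
    have e3 : Uᴴ * U = (u * diagonal g * star u) * (Mᴴ * M) * (u * diagonal g * star u) := by
      rw [hU, conjTranspose_mul, hTh]
      simp only [Matrix.mul_assoc]
    rw [e3, hspec, mulsand, mulsand]
    refine congrArg (fun f => u * diagonal f * star u) (funext fun i => ?_)
    by_cases h : d i = 0
    · simp [hg, he, h]
    · have hd0 : 0 < d i := lt_of_le_of_ne (hdnn i) (Ne.symm h)
      have hs0 : Real.sqrt (d i) ≠ 0 := by positivity
      have key : ((Real.sqrt (d i) : ℂ))⁻¹ * (d i : ℂ) * ((Real.sqrt (d i) : ℂ))⁻¹ = 1 := by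
        rw [← Complex.ofReal_inv, ← Complex.ofReal_mul, ← Complex.ofReal_mul,
          ← Complex.ofReal_one]
        congr 1
        have h2 := Real.mul_self_sqrt (hdnn i)
        field_simp [h2]
        exact (Real.sq_sqrt (hdnn i)).symm
      simp only [hg, he]
      simp only [h, if_neg h, ite_false]
      exact key
  have hMe : M * (u * diagonal e * star u) = M := by
    set f : n → ℂ := fun i => if d i = 0 then 1 else 0 with hfdef
    have h0 : M * (u * diagonal f * star u) = 0 := by
      refine hannih f (fun i => ?_) (fun i => ?_)
      · by_cases h : d i = 0 <;> simp [hfdef, h]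
      · by_cases h : d i = 0 <;> simp [hfdef, h]
    have hef : u * diagonal e * star u + u * diagonal f * star u = 1 := by
      have hd1 : diagonal e + diagonal f = 1 := by
        rw [diagonal_add, ← diagonal_one]
        refine congrArg diagonal (funext fun i => ?_)
        by_cases h : d i = 0 <;> simp [he, hfdef, h]
      calc u * diagonal e * star u + u * diagonal f * star u
          = u * ((diagonal e + diagonal f) * star u) := by
            rw [Matrix.add_mul, Matrix.mul_add]
            simp only [Matrix.mul_assoc]
        _ = u * star u := by rw [hd1, Matrix.one_mul]
        _ = 1 := hus
    calc M * (u * diagonal e * star u)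
        = M * (u * diagonal e * star u) + M * (u * diagonal f * star u) := by rw [h0, add_zero]
      _ = M * ((u * diagonal e * star u) + (u * diagonal f * star u)) := by rw [Matrix.mul_add]
      _ = M := by rw [hef, Matrix.mul_one]
  refine ⟨U, ?_, ?_, ?_⟩
  · have e4 : U * hH.sqrt
        = M * ((u * diagonal g * star u) * (u * diagonal (fun i => (Real.sqrt (d i) : ℂ)) * star u)) := by
      rw [hU, hsqrt, Matrix.mul_assoc]
    rw [e4, mulsand]
    have hge2 : (fun i => g i * (Real.sqrt (d i) : ℂ)) = e := by
      funext i
      by_cases h : d i = 0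
      · simp [hg, he, h]
      · have hd0 : 0 < d i := lt_of_le_of_ne (hdnn i) (Ne.symm h)
        have hs0 : (Real.sqrt (d i) : ℂ) ≠ 0 := by
          simp only [ne_eq, Complex.ofReal_eq_zero]
          positivity
        simp [hg, he, h, inv_mul_cancel₀ hs0]
    calc M = M * (u * diagonal e * star u) := hMe.symm
      _ = M * (u * diagonal (fun i => g i * (Real.sqrt (d i) : ℂ)) * star u) := by rw [hge2]
  · rw [hUU, hsqrt, mulsand]
    refine congrArg (fun f => u * diagonal f * star u) (funext fun i => ?_)
    by_cases h : d i = 0 <;> simp [he, h]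
  · rw [hUU, mulsand]
    refine congrArg (fun f => u * diagonal f * star u) (funext fun i => ?_)
    by_cases h : d i = 0 <;> simp [he, h]

private lemma traceNorm_eq_of_gram' {A : Matrix m n ℂ} {B : Matrix p n ℂ} (h : Aᴴ*A = Bᴴ*B) :
    traceNorm A = traceNorm B := by
  unfold traceNorm
  have : (posSemidef_conjTranspose_mul_self A).sqrt
      = (posSemidef_conjTranspose_mul_self B).sqrt := by
    refine ((posSemidef_conjTranspose_mul_self A).posSemidef_sqrt).eq_sqrt_of_sq_eq
      (posSemidef_conjTranspose_mul_self B) ?_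
    rw [(posSemidef_conjTranspose_mul_self A).sq_sqrt, h]
  rw [this]

private lemma one_sub_idem_psd' {Q : Matrix n n ℂ} (hherm : Qᴴ = Q) (hidem : Q*Q = Q) :
    (1 - Q).PosSemidef := by
  have key : (1-Q)ᴴ*(1-Q) = 1 - Q := by
    rw [conjTranspose_sub, conjTranspose_one, hherm]
    simp only [Matrix.sub_mul, Matrix.mul_sub, Matrix.one_mul, Matrix.mul_one, hidem]
    abel
  rw [← key]
  exact posSemidef_conjTranspose_mul_self _

private lemma traceNorm_conjTranspose' (M : Matrix m n ℂ) : traceNorm Mᴴ = traceNorm M := by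
  obtain ⟨U, hM, hUP, hidem⟩ := polar' M
  set P := (posSemidef_conjTranspose_mul_self M).sqrt with hPdef
  have hP : P.PosSemidef := (posSemidef_conjTranspose_mul_self M).posSemidef_sqrt
  have key : (posSemidef_conjTranspose_mul_self Mᴴ).sqrt = U * P * Uᴴ := by
    refine (((hP.mul_mul_conjTranspose_same U).eq_sqrt_of_sq_eq
      (posSemidef_conjTranspose_mul_self Mᴴ) ?_)).symm
    rw [pow_two]
    calc (U*P*Uᴴ) * (U*P*Uᴴ) = U*(P*((Uᴴ*U*P)*Uᴴ)) := by simp only [Matrix.mul_assoc]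
      _ = U*(P*(P*Uᴴ)) := by rw [hUP]
      _ = U*(P*P)*Uᴴ := by simp only [Matrix.mul_assoc]
      _ = Mᴴᴴ*Mᴴ := by
          rw [conjTranspose_conjTranspose]
          conv_rhs => rw [hM]
          rw [conjTranspose_mul, hP.1.eq]
          simp only [Matrix.mul_assoc]
  unfold traceNorm
  rw [key]
  have : (U * P * Uᴴ).trace = P.trace := by
    rw [Matrix.trace_mul_comm (U * P) Uᴴ, ← Matrix.mul_assoc, hUP]
  rw [this]

end UhlmannAux

section UhlmannKron

variable {a b c : Type*} [Fintype a] [Fintype b] [Fintype c]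
  [DecidableEq a] [DecidableEq b] [DecidableEq c]

private lemma inner_kron' (ψ : EuclideanSpace ℂ (a × b)) (φ : EuclideanSpace ℂ (a × c))
    (V : Matrix c b ℂ) :
    ⟪ψ, (EuclideanSpace.equiv (a × b) ℂ).symm
        (((1 : Matrix a a ℂ) ⊗ₖ Vᴴ).mulVec (fun p => φ p))⟫_ℂ
    = ((Matrix.of fun i j => ψ (i,j))ᴴ * (Matrix.of fun i l => φ (i,l))
        * V.map (starRingEnd ℂ)).trace := by
  simp only [PiLp.inner_apply, RCLike.inner_apply, Matrix.trace, Matrix.diag_apply,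
    Matrix.mul_apply, Matrix.mulVec, dotProduct, kroneckerMap_apply, Matrix.one_apply,
    Fintype.sum_prod_type, Matrix.map_apply, conjTranspose_apply, Matrix.of_apply,
    EuclideanSpace.equiv, PiLp.continuousLinearEquiv_symm_apply]
  simp only [Finset.mul_sum, Finset.sum_mul, mul_ite, ite_mul, mul_zero, zero_mul, one_mul,
    Finset.sum_ite_eq, Finset.mem_univ, if_true, starRingEnd_apply]
  have swap_inner : ∀ (x : a) (y : b),
      (∑ z : a, ∑ w : c, if x = z then star (V w y) * φ (z, w) * star (ψ (x, y)) else 0)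
      = ∑ w : c, star (V w y) * φ (x, w) * star (ψ (x, y)) := by
    intro x y
    rw [Finset.sum_comm]
    simp [Finset.sum_ite_eq, Finset.mem_univ]
  simp only [swap_inner]
  conv_lhs => rw [Finset.sum_comm]
  refine Finset.sum_congr rfl fun j _ => ?_
  conv_lhs => rw [Finset.sum_comm]
  exact Finset.sum_congr rfl fun l _ => Finset.sum_congr rfl fun i _ => by ring

end UhlmannKron

/-- Uhlmann's theorem: for purifications `|ψ⟩` of `ρ` and `|φ⟩` of `σ`, the fidelity
`F(ρ,σ) = ‖√ρ√σ‖₁` equals the maximum over partial isometries `V : B → C` of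
`|⟨ψ|(I ⊗ V†)|φ⟩|`, and the maximum is attained. -/
theorem uhlmann
    {a b c : Type*} [Fintype a] [Fintype b] [Fintype c]
    [DecidableEq a] [DecidableEq b] [DecidableEq c]
    (ρ σ : Matrix a a ℂ)
    (hρ : ρ.PosSemidef) (hρ1 : ρ.trace = 1)
    (hσ : σ.PosSemidef) (hσ1 : σ.trace = 1)
    (ψ : EuclideanSpace ℂ (a × b)) (hψ : ‖ψ‖ = 1)
    (hψρ : ptraceSnd (Matrix.vecMulVec (fun p => ψ p) (fun p => (starRingEnd ℂ) (ψ p))) = ρ)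
    (φ : EuclideanSpace ℂ (a × c)) (hφ : ‖φ‖ = 1)
    (hφσ : ptraceSnd (Matrix.vecMulVec (fun p => φ p) (fun p => (starRingEnd ℂ) (φ p))) = σ) :
    IsGreatest { x : ℝ | ∃ V : Matrix c b ℂ,
        (Vᴴ * V) * (Vᴴ * V) = Vᴴ * V ∧
        x = ‖(⟪ψ, (EuclideanSpace.equiv (a × b) ℂ).symm
              ((((1 : Matrix a a ℂ) ⊗ₖ Vᴴ).mulVec (fun p => φ p)))⟫_ℂ)‖ }
      (traceNorm (hρ.sqrt * hσ.sqrt)) := by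
  classical
  set X : Matrix a b ℂ := Matrix.of fun i j => ψ (i,j) with hXdef
  set Y : Matrix a c ℂ := Matrix.of fun i l => φ (i,l) with hYdef
  have hXX : X * Xᴴ = ρ := by
    rw [← hψρ]
    ext i j
    simp only [hXdef, ptraceSnd, Matrix.vecMulVec_apply, Matrix.mul_apply, conjTranspose_apply,
      Matrix.of_apply]
    rfl
  have hYY : Y * Yᴴ = σ := by
    rw [← hφσ]
    ext i j
    simp only [hYdef, ptraceSnd, Matrix.vecMulVec_apply, Matrix.mul_apply, conjTranspose_apply,
      Matrix.of_apply]
    rfl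
  set M : Matrix b c ℂ := Xᴴ * Y with hMdef
  -- Step 1 : the trace norms agree
  have hTN : traceNorm (hρ.sqrt * hσ.sqrt) = traceNorm M := by
    have h1 : traceNorm (hρ.sqrt * hσ.sqrt) = traceNorm (hσ.sqrt * hρ.sqrt) := by
      rw [← traceNorm_conjTranspose' (hσ.sqrt * hρ.sqrt)]
      congr 1
      rw [conjTranspose_mul, hρ.posSemidef_sqrt.1.eq, hσ.posSemidef_sqrt.1.eq]
    have h2 : traceNorm (hσ.sqrt * hρ.sqrt) = traceNorm (Yᴴ * hρ.sqrt) := by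
      refine traceNorm_eq_of_gram' ?_
      rw [conjTranspose_mul, conjTranspose_mul, conjTranspose_conjTranspose,
        hσ.posSemidef_sqrt.1.eq, hρ.posSemidef_sqrt.1.eq]
      calc hρ.sqrt * hσ.sqrt * (hσ.sqrt * hρ.sqrt)
          = hρ.sqrt * (hσ.sqrt * hσ.sqrt) * hρ.sqrt := by simp only [Matrix.mul_assoc]
        _ = hρ.sqrt * (Y * Yᴴ) * hρ.sqrt := by rw [hσ.sqrt_mul_self, hYY]
        _ = hρ.sqrt * Y * (Yᴴ * hρ.sqrt) := by simp only [Matrix.mul_assoc]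
    have h3 : traceNorm (Yᴴ * hρ.sqrt) = traceNorm (hρ.sqrt * Y) := by
      rw [← traceNorm_conjTranspose' (hρ.sqrt * Y)]
      congr 1
      rw [conjTranspose_mul, hρ.posSemidef_sqrt.1.eq]
    have h4 : traceNorm (hρ.sqrt * Y) = traceNorm M := by
      refine traceNorm_eq_of_gram' ?_
      rw [hMdef, conjTranspose_mul, conjTranspose_mul, conjTranspose_conjTranspose,
        hρ.posSemidef_sqrt.1.eq]
      calc Yᴴ * hρ.sqrt * (hρ.sqrt * Y)
          = Yᴴ * (hρ.sqrt * hρ.sqrt) * Y := by simp only [Matrix.mul_assoc]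
        _ = Yᴴ * (X * Xᴴ) * Y := by rw [hρ.sqrt_mul_self, hXX]
        _ = Yᴴ * X * (Xᴴ * Y) := by simp only [Matrix.mul_assoc]
    rw [h1, h2, h3, h4]
  obtain ⟨U, hMU, hUP, hidem⟩ := polar' M
  set P := (posSemidef_conjTranspose_mul_self M).sqrt with hPdef
  have hP : P.PosSemidef := (posSemidef_conjTranspose_mul_self M).posSemidef_sqrt
  have htnM : traceNorm M = P.trace.re := rfl
  constructor
  · -- membership : V = Uᵀ attains the maximum
    refine ⟨Uᵀ, ?_, ?_⟩
    · have e1 : Uᵀᴴ * Uᵀ = (U * Uᴴ)ᵀ := by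
        rw [Matrix.transpose_mul]
        congr 1
      rw [e1, ← Matrix.transpose_mul, idem_flip' hidem]
    · rw [inner_kron' ψ φ Uᵀ]
      have e2 : Uᵀ.map (starRingEnd ℂ) = Uᴴ := rfl
      rw [e2, ← hXdef, ← hYdef, ← hMdef]
      have e3 : (M * Uᴴ).trace = P.trace := by
        rw [Matrix.trace_mul_comm M Uᴴ]
        conv_lhs => rw [hMU]
        rw [← Matrix.mul_assoc, hUP]
      rw [e3, psd_abs_trace' hP, hTN, htnM]
  · -- upper bound
    rintro x ⟨V, hV, rfl⟩
    rw [inner_kron' ψ φ V, ← hXdef, ← hYdef, ← hMdef, hTN, htnM]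
    set C : Matrix c b ℂ := V.map (starRingEnd ℂ) with hCdef
    set R := hP.sqrt with hRdef
    have hR : R.PosSemidef := hP.posSemidef_sqrt
    have hRR : R * R = P := hP.sqrt_mul_self
    have hRH : Rᴴ = R := hR.1.eq
    -- rewrite the trace
    have htr : (M * C).trace = (Rᴴ * (C * (U * R))).trace := by
      rw [hRH, Matrix.trace_mul_comm R (C * (U * R))]
      calc (M * C).trace = (C * M).trace := Matrix.trace_mul_comm M C
        _ = (C * (U * R) * R).trace := by
            conv_lhs => rw [hMU, ← hRR]
            simp only [Matrix.mul_assoc]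
    -- the contraction bounds
    have hCC : Cᴴ * C = (Vᴴ * V)ᵀ := by
      ext i j
      simp only [Matrix.mul_apply, conjTranspose_apply, Matrix.map_apply, transpose_apply,
        hCdef, RCLike.star_def, Complex.conj_conj]
      exact Finset.sum_congr rfl fun k _ => by ring
    have hQherm : (Vᴴ * V)ᴴ = Vᴴ * V := (posSemidef_conjTranspose_mul_self V).1.eq
    have h1K : (1 - Cᴴ * C).PosSemidef := by
      rw [hCC]
      have h := (one_sub_idem_psd' hQherm hV).transpose
      rw [Matrix.transpose_sub, Matrix.transpose_one] at h
      exact h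
    have hUherm : (Uᴴ * U)ᴴ = Uᴴ * U := (posSemidef_conjTranspose_mul_self U).1.eq
    have h1U : (1 - Uᴴ * U).PosSemidef := one_sub_idem_psd' hUherm hidem
    -- two monotonicity steps
    have m1 : ((C * (U * R))ᴴ * (C * (U * R))).trace.re ≤ ((U * R)ᴴ * (U * R)).trace.re := by
      refine trace_re_mono' ?_
      have h := h1K.conjTranspose_mul_mul_same (U * R)
      have expand : (U * R)ᴴ * (1 - Cᴴ * C) * (U * R)
          = (U * R)ᴴ * (U * R) - (C * (U * R))ᴴ * (C * (U * R)) := by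
        simp only [conjTranspose_mul, Matrix.mul_sub, Matrix.sub_mul, Matrix.mul_one,
          Matrix.one_mul, Matrix.mul_assoc]
      rwa [expand] at h
    have m2 : ((U * R)ᴴ * (U * R)).trace.re ≤ (Rᴴ * R).trace.re := by
      refine trace_re_mono' ?_
      have h := h1U.conjTranspose_mul_mul_same R
      have expand : Rᴴ * (1 - Uᴴ * U) * R = Rᴴ * R - (U * R)ᴴ * (U * R) := by
        simp only [conjTranspose_mul, Matrix.mul_sub, Matrix.sub_mul, Matrix.mul_one,
          Matrix.one_mul, Matrix.mul_assoc]
      rwa [expand] at h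
    have hRRP : (Rᴴ * R).trace.re = P.trace.re := by rw [hRH, hRR]
    have hPnn : 0 ≤ P.trace.re := by
      have h := psd_trace_nonneg' hP
      rw [Complex.nonneg_iff] at h
      exact h.1
    have hCS := cs_trace' R (C * (U * R))
    rw [htr]
    calc ‖(Rᴴ * (C * (U * R))).trace‖
        ≤ Real.sqrt ((Rᴴ * R).trace.re) * Real.sqrt (((C * (U * R))ᴴ * (C * (U * R))).trace.re) :=
          hCS
      _ ≤ Real.sqrt (P.trace.re) * Real.sqrt (P.trace.re) := by
          refine mul_le_mul ?_ ?_ (Real.sqrt_nonneg _) (Real.sqrt_nonneg _)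
          · exact Real.sqrt_le_sqrt (le_of_eq hRRP)
          · exact Real.sqrt_le_sqrt ((m1.trans m2).trans (le_of_eq hRRP))
      _ = P.trace.re := Real.mul_self_sqrt hPnn
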